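/- Let G be a connected simple graph on n vertices with exactly p = n-2 pendent (degree-one) vertices, n ≥ 4. Then ABC(G) ≤ (n-3)·sqrt((n-3)/(n-2)) + sqrt(2), with equality iff G is the graph obtained by attaching n-3 pendent edges to one end of a path on three vertices. -/

import Mathlib

/-- The degree of a vertex. -/
noncomputable def deg {V : Type*} (G : SimpleGraph V) (v : V) : ℕ :=
  Nat.card {w | G.Adj v w}

open scoped Classical in
/-- The atom-bond connectivity index:
`ABC(G) = ∑_{uv ∈ E(G)} sqrt((d(u)+d(v)-2)/(d(u)d(v)))`,
computed as half the sum over ordered adjacent pairs. -/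
noncomputable def ABC {V : Type*} [Fintype V] (G : SimpleGraph V) : ℝ :=
  (∑ u : V, ∑ v : V, if G.Adj u v then
    Real.sqrt (((deg G u : ℝ) + (deg G v : ℝ) - 2) / ((deg G u : ℝ) * (deg G v : ℝ)))
  else 0) / 2

/-- The graph obtained by attaching `n-3` pendent edges to one end of a path on three
vertices: path `0 - 1 - 2`, with pendent vertices `3, …, n-1` attached to vertex `0`. -/
def Gprime (n : ℕ) : SimpleGraph (Fin n) where
  Adj u v := (u.val = 0 ∧ v.val = 1) ∨ (u.val = 1 ∧ v.val = 0) ∨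
    (u.val = 1 ∧ v.val = 2) ∨ (u.val = 2 ∧ v.val = 1) ∨
    (u.val = 0 ∧ 3 ≤ v.val) ∨ (v.val = 0 ∧ 3 ≤ u.val)
  symm := ⟨by intro u v h; tauto⟩
  loopless := ⟨by
    intro u h
    rcases h with ⟨h1, h2⟩ | ⟨h1, h2⟩ | ⟨h1, h2⟩ | ⟨h1, h2⟩ | ⟨h1, h2⟩ | ⟨h1, h2⟩ <;> omega⟩

noncomputable def hfun (x : ℝ) : ℝ := x * Real.sqrt (x / (x+1))

noncomputable def hder (x : ℝ) : ℝ :=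
  Real.sqrt x * (2*x+3) / (2*(x+1) * Real.sqrt (x+1))

lemma hfun_hasDerivAt {x : ℝ} (hx : 0 < x) : HasDerivAt hfun (hder x) x := by
  have hx1 : (0:ℝ) < x + 1 := by linarith
  have hsx : (0:ℝ) < Real.sqrt x := Real.sqrt_pos.2 hx
  have hsx1 : (0:ℝ) < Real.sqrt (x+1) := Real.sqrt_pos.2 hx1
  have hnum : HasDerivAt (fun t : ℝ => t * Real.sqrt t)
      (1 * Real.sqrt x + x * (1 / (2 * Real.sqrt x))) x :=
    (hasDerivAt_id x).mul (Real.hasDerivAt_sqrt hx.ne')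
  have hden : HasDerivAt (fun t : ℝ => Real.sqrt (t+1))
      (1 / (2 * Real.sqrt (x+1)) * 1) x :=
    (Real.hasDerivAt_sqrt (by positivity)).comp x ((hasDerivAt_id x).add_const 1)
  have hq := hnum.div hden hsx1.ne'
  have heq : hfun =ᶠ[nhds x] (fun t : ℝ => t * Real.sqrt t / Real.sqrt (t+1)) := by
    filter_upwards [Ioi_mem_nhds hx] with t ht
    unfold hfun
    rw [Real.sqrt_div (le_of_lt ht), mul_div_assoc]
  have h2 := hq.congr_of_eventuallyEq heq
  refine h2.congr_deriv ?_
  symm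
  unfold hder
  have ha : Real.sqrt x ^ 2 = x := Real.sq_sqrt hx.le
  have hb : Real.sqrt (x+1) ^ 2 = x + 1 := Real.sq_sqrt hx1.le
  set a := Real.sqrt x with hadef
  set b := Real.sqrt (x+1) with hbdef
  rw [div_eq_div_iff (by positivity) (by positivity)]
  field_simp
  linear_combination (x + x^2 + b^2) * ha + (-x^2) * hb

lemma hder_strictMono : StrictMonoOn hder (Set.Ioi 0) := by
  intro x hx y hy hxy
  simp only [Set.mem_Ioi] at hx hy
  have hx1 : (0:ℝ) < x + 1 := by linarith
  have hy1 : (0:ℝ) < y + 1 := by linarith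
  have hax : (0:ℝ) < Real.sqrt x := Real.sqrt_pos.2 hx
  have hay : (0:ℝ) < Real.sqrt y := Real.sqrt_pos.2 hy
  have hbx : (0:ℝ) < Real.sqrt (x+1) := Real.sqrt_pos.2 hx1
  have hby : (0:ℝ) < Real.sqrt (y+1) := Real.sqrt_pos.2 hy1
  have h1 : hder x ^ 2 < hder y ^ 2 := by
    unfold hder
    have e1 : ∀ z : ℝ, 0 < z → (Real.sqrt z * (2*z+3) / (2*(z+1) * Real.sqrt (z+1)))^2
        = z * (2*z+3)^2 / (4*(z+1)^3) := by
      intro z hz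
      have hz1 : (0:ℝ) < z + 1 := by linarith
      rw [div_pow, mul_pow, mul_pow, mul_pow, Real.sq_sqrt hz.le, Real.sq_sqrt hz1.le]
      ring
    rw [e1 x hx, e1 y hy, div_lt_div_iff₀ (by positivity) (by positivity)]
    nlinarith [mul_pos (sub_pos.2 hxy)
      (show (0:ℝ) < 3*x*y*(x+y) + 9*x*y + 4*(x^2+x*y+y^2) + 12*(x+y) + 9 by positivity),
      mul_pos hx hy, sq_nonneg (x-y)]
  have h0 : 0 ≤ hder x := by unfold hder; positivity
  have h0' : 0 ≤ hder y := by unfold hder; positivity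
  nlinarith [h1, h0, h0']

lemma hfun_continuousOn : ContinuousOn hfun (Set.Ici 0) := by
  apply ContinuousOn.mul continuousOn_id
  apply ContinuousOn.sqrt
  apply ContinuousOn.div continuousOn_id (by fun_prop)
  intro x hx
  simp only [Set.mem_Ici] at hx; intro h; linarith

lemma hfun_strictConvexOn : StrictConvexOn ℝ (Set.Ici 0) hfun := by
  apply StrictMonoOn.strictConvexOn_of_deriv (convex_Ici 0) hfun_continuousOn
  rw [interior_Ici]
  intro x hx y hy hxy
  rw [(hfun_hasDerivAt hx).deriv, (hfun_hasDerivAt hy).deriv]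
  exact hder_strictMono hx hy hxy

lemma sqrt_half' : Real.sqrt (1/2) = Real.sqrt 2 / 2 := by
  rw [show (1:ℝ)/2 = 2/2^2 by norm_num, Real.sqrt_div (by norm_num : (0:ℝ) ≤ 2),
    Real.sqrt_sq (by norm_num : (0:ℝ) ≤ 2)]

lemma hfun_one : hfun 1 = Real.sqrt 2 / 2 := by
  unfold hfun
  rw [one_mul, show (1:ℝ)/(1+1) = 1/2 by norm_num, sqrt_half']

lemma hfun_endpoint_strict {a b : ℝ} (ha : 1 < a) (hb : 1 < b) :
    hfun a + hfun b < hfun (a+b-1) + hfun 1 := by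
  set s := a + b with hs
  have hs2 : (0:ℝ) < s - 2 := by simp [hs]; linarith
  set lam := (b-1)/(s-2) with hlam
  set mu := (a-1)/(s-2) with hmu
  have hlp : 0 < lam := div_pos (by linarith) hs2
  have hmp : 0 < mu := div_pos (by linarith) hs2
  have hsum : lam + mu = 1 := by
    rw [hlam, hmu, ← add_div, div_eq_one_iff_eq hs2.ne', hs]; ring
  have h1m : (1:ℝ) ∈ Set.Ici (0:ℝ) := by norm_num
  have h2m : s - 1 ∈ Set.Ici (0:ℝ) := by simp [hs]; linarith
  have hne : (1:ℝ) ≠ s - 1 := by simp [hs]; intro h; linarith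
  have c1 := hfun_strictConvexOn.2 h1m h2m hne hlp hmp hsum
  have c2 := hfun_strictConvexOn.2 h1m h2m hne hmp hlp (by linarith)
  simp only [smul_eq_mul] at c1 c2
  have e1 : lam * 1 + mu * (s-1) = a := by
    rw [hlam, hmu, mul_one, div_mul_eq_mul_div, ← add_div, div_eq_iff hs2.ne', hs]; ring
  have e2 : mu * 1 + lam * (s-1) = b := by
    rw [hlam, hmu, mul_one, div_mul_eq_mul_div, ← add_div, div_eq_iff hs2.ne', hs]; ring
  rw [e1] at c1
  rw [e2] at c2
  have : hfun a + hfun b < (lam + mu) * hfun 1 + (mu + lam) * hfun (s-1) := by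
    calc hfun a + hfun b < (lam * hfun 1 + mu * hfun (s-1)) +
        (mu * hfun 1 + lam * hfun (s-1)) := by linarith
      _ = (lam + mu) * hfun 1 + (mu + lam) * hfun (s-1) := by ring
  rw [hsum, show mu + lam = 1 by linarith] at this
  linarith

lemma bridge_le {a b : ℝ} (ha : 1 ≤ a) (hb : 1 ≤ b) :
    Real.sqrt ((a+b)/((a+1)*(b+1))) ≤ Real.sqrt 2 / 2 := by
  rw [← sqrt_half']
  apply Real.sqrt_le_sqrt
  rw [div_le_div_iff₀ (by positivity) (by norm_num)]
  nlinarith [mul_nonneg (sub_nonneg.2 ha) (sub_nonneg.2 hb)]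

lemma key_ineq {a b : ℝ} (ha : 1 ≤ a) (hb : 1 ≤ b) :
    hfun a + hfun b + Real.sqrt ((a+b)/((a+1)*(b+1))) ≤ hfun (a+b-1) + Real.sqrt 2 ∧
    (hfun a + hfun b + Real.sqrt ((a+b)/((a+1)*(b+1))) = hfun (a+b-1) + Real.sqrt 2 ↔
      a = 1 ∨ b = 1) := by
  have hend : hfun a + hfun b ≤ hfun (a+b-1) + hfun 1 := by
    rcases eq_or_lt_of_le ha with h | h
    · rw [← h]; simp [show a + b - 1 = b by rw [← h]; ring]; linarith [hfun_one]
    rcases eq_or_lt_of_le hb with h' | h'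
    · rw [← h', show a + (1:ℝ) - 1 = a by ring]
    · exact (hfun_endpoint_strict h h').le
  have hbr := bridge_le ha hb
  have h2 : hfun 1 + Real.sqrt 2 / 2 = Real.sqrt 2 := by rw [hfun_one]; ring
  constructor
  · linarith
  constructor
  · intro heq
    by_contra hcon
    push_neg at hcon
    have h1 : 1 < a := lt_of_le_of_ne ha (Ne.symm hcon.1)
    have h2' : 1 < b := lt_of_le_of_ne hb (Ne.symm hcon.2)
    have := hfun_endpoint_strict h1 h2'
    linarith
  · rintro (rfl | rfl)
    · rw [show (1:ℝ) + b - 1 = b by ring,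
        show ((1:ℝ)+b)/((1+1)*(b+1)) = 1/2 by field_simp; ring, sqrt_half', hfun_one]
      ring
    · rw [show a + (1:ℝ) - 1 = a by ring,
        show (a+(1:ℝ))/((a+1)*(1+1)) = 1/2 by
          have hne : (a:ℝ)+1 ≠ 0 := by linarith
          rw [div_mul_eq_div_div, div_self hne]; norm_num, sqrt_half', hfun_one]
      ring

open Finset in
lemma reach_closed {V : Type*} (G : SimpleGraph V) (C : Set V)
    (hC : ∀ a ∈ C, ∀ b, G.Adj a b → b ∈ C) {x y : V} (hx : x ∈ C)
    (h : G.Reachable x y) : y ∈ C := by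
  obtain ⟨w⟩ := h
  induction w with
  | nil => exact hx
  | cons hadj p ih => exact ih (hC _ hx _ hadj)

open Finset in
lemma deg_card (G : SimpleGraph (Fin n)) [DecidableRel G.Adj] (x : Fin n) :
    deg G x = (Finset.univ.filter (fun w => G.Adj x w)).card := by
  unfold deg
  rw [Nat.card_eq_fintype_card, ← Set.toFinset_card]
  congr 1
  ext w
  simp

open Finset in
lemma structure_lemma {n : ℕ} (hn : 4 ≤ n) (G : SimpleGraph (Fin n))
    (hconn : G.Connected) (hp : Nat.card {v | deg G v = 1} = n - 2) :
    ∃ (u v : Fin n) (A B : Finset (Fin n)), u ≠ v ∧ G.Adj u v ∧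
      A.card + B.card = n - 2 ∧ 1 ≤ A.card ∧ 1 ≤ B.card ∧
      deg G u = A.card + 1 ∧ deg G v = B.card + 1 ∧
      (∀ x ∈ A, deg G x = 1) ∧ (∀ x ∈ B, deg G x = 1) ∧
      u ∉ A ∧ u ∉ B ∧ v ∉ A ∧ v ∉ B ∧ Disjoint A B ∧
      insert u (insert v (A ∪ B)) = Finset.univ ∧
      (∀ x y : Fin n, G.Adj x y ↔ ((x = u ∧ y = v) ∨ (x = v ∧ y = u) ∨
        (x = u ∧ y ∈ A) ∨ (y = u ∧ x ∈ A) ∨ (x = v ∧ y ∈ B) ∨ (y = v ∧ x ∈ B))) := by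
  classical
  have hnt : Nontrivial (Fin n) := Fin.nontrivial_iff_two_le.2 (by omega)
  -- every vertex has a neighbor
  have hnbr : ∀ x : Fin n, ∃ y, G.Adj x y := by
    intro x
    obtain ⟨y, hy⟩ := exists_ne x
    obtain ⟨w⟩ := (hconn x y)
    cases w with
    | nil => exact absurd rfl hy
    | cons hadj _ => exact ⟨_, hadj⟩
  -- degree positivity
  have hdegpos : ∀ x : Fin n, 1 ≤ deg G x := by
    intro x
    obtain ⟨y, hy⟩ := hnbr x
    rw [deg_card]
    exact Finset.card_pos.2 ⟨y, by simp [hy]⟩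
  -- unique neighbor of a leaf
  have huniq : ∀ x y z : Fin n, deg G x = 1 → G.Adj x y → G.Adj x z → z = y := by
    intro x y z hx hy hz
    rw [deg_card] at hx
    obtain ⟨w, hw⟩ := Finset.card_eq_one.1 hx
    have h1 : y ∈ Finset.univ.filter (fun w => G.Adj x w) := by simp [hy]
    have h2 : z ∈ Finset.univ.filter (fun w => G.Adj x w) := by simp [hz]
    rw [hw] at h1 h2
    simp at h1 h2
    rw [h1, h2]
  -- the leaf set and non-leaf set
  set P : Finset (Fin n) := Finset.univ.filter (fun v => deg G v = 1) with hP
  have hPcard : P.card = n - 2 := by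
    rw [← hp, hP]
    rw [Nat.card_eq_fintype_card, ← Set.toFinset_card]
    congr 1
    ext w
    simp
  set S : Finset (Fin n) := Finset.univ.filter (fun v => deg G v ≠ 1) with hS
  have hScard : S.card = 2 := by
    have := Finset.card_filter_add_card_filter_not
      (s := (Finset.univ : Finset (Fin n))) (p := fun v => deg G v = 1)
    rw [Finset.card_univ, Fintype.card_fin] at this
    have hcard : P.card + S.card = n := this
    omega
  obtain ⟨u, v, huv, hSuv⟩ := Finset.card_eq_two.1 hScard
  have hdu : deg G u ≠ 1 := by
    have : u ∈ S := by rw [hSuv]; simp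
    rw [hS] at this; simpa using this
  have hdv : deg G v ≠ 1 := by
    have : v ∈ S := by rw [hSuv]; simp
    rw [hS] at this; simpa using this
  have hleaf : ∀ x : Fin n, x ≠ u → x ≠ v → deg G x = 1 := by
    intro x hxu hxv
    by_contra hx
    have : x ∈ S := by rw [hS]; simp [hx]
    rw [hSuv] at this
    simp at this
    tauto
  -- a leaf is not adjacent to a leaf
  have hll : ∀ x y : Fin n, deg G x = 1 → deg G y = 1 → ¬ G.Adj x y := by
    intro x y hx hy hadj
    have hclosed : ∀ a ∈ ({x, y} : Set (Fin n)), ∀ b, G.Adj a b → b ∈ ({x,y} : Set (Fin n)) := by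
      rintro a (rfl | rfl) b hab
      · right; exact huniq a y b hx hadj hab
      · left; exact huniq a x b hy hadj.symm hab
    have hu2 : u ∈ ({x, y} : Set (Fin n)) :=
      reach_closed G _ hclosed (by left; rfl) (hconn x u)
    rcases hu2 with rfl | rfl
    · exact hdu hx
    · exact hdu hy
  -- every neighbor of a leaf is u or v
  have hlnbr : ∀ x y : Fin n, deg G x = 1 → G.Adj x y → y = u ∨ y = v := by
    intro x y hx hadj
    by_contra hcon
    push_neg at hcon
    exact hll x y hx (hleaf y hcon.1 hcon.2) hadj
  -- u and v are adjacent
  have hadjuv : G.Adj u v := by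
    by_contra hcon
    have hclosed : ∀ a ∈ ({u} ∪ {z | G.Adj u z} : Set (Fin n)), ∀ b, G.Adj a b →
        b ∈ ({u} ∪ {z | G.Adj u z} : Set (Fin n)) := by
      rintro a (rfl | ha) b hab
      · right; exact hab
      · simp only [Set.mem_setOf_eq] at ha
        have haleaf : deg G a = 1 := by
          apply hleaf
          · rintro rfl; exact G.loopless.irrefl _ ha
          · rintro rfl; exact hcon ha
        left
        exact huniq a u b haleaf ha.symm hab
    have hv : v ∈ ({u} ∪ {z | G.Adj u z} : Set (Fin n)) :=
      reach_closed G _ hclosed (by left; rfl) (hconn u v)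
    rcases hv with rfl | hv
    · exact huv rfl
    · exact hcon hv
  -- the leaf groups
  set A : Finset (Fin n) := P.filter (fun x => G.Adj u x) with hA
  set B : Finset (Fin n) := P.filter (fun x => G.Adj v x) with hB
  have hAleaf : ∀ x ∈ A, deg G x = 1 := by
    intro x hx; rw [hA, hP] at hx; simp at hx; exact hx.1
  have hBleaf : ∀ x ∈ B, deg G x = 1 := by
    intro x hx; rw [hB, hP] at hx; simp at hx; exact hx.1
  have hdisj : Disjoint A B := by
    rw [Finset.disjoint_left]
    intro x hxA hxB
    rw [hA, hP] at hxA; rw [hB, hP] at hxB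
    simp at hxA hxB
    exact huv (huniq x v u hxA.1 hxB.2.symm hxA.2.symm)
  have huA : u ∉ A := fun h => hdu (hAleaf u h)
  have huB : u ∉ B := fun h => hdu (hBleaf u h)
  have hvA : v ∉ A := fun h => hdv (hAleaf v h)
  have hvB : v ∉ B := fun h => hdv (hBleaf v h)
  have hunion : A ∪ B = P := by
    apply Finset.Subset.antisymm
    · intro x hx
      rw [Finset.mem_union] at hx
      rcases hx with h | h
      · exact Finset.filter_subset _ _ h
      · exact Finset.filter_subset _ _ h
    · intro x hx
      have hx1 : deg G x = 1 := by rw [hP] at hx; simpa using hx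
      obtain ⟨y, hy⟩ := hnbr x
      rcases hlnbr x y hx1 hy with rfl | rfl
      · exact Finset.mem_union_left _ (by rw [hA]; simp [hx, hy.symm])
      · exact Finset.mem_union_right _ (by rw [hB]; simp [hx, hy.symm])
  have hcards : A.card + B.card = n - 2 := by
    rw [← Finset.card_union_of_disjoint hdisj, hunion, hPcard]
  -- adjacency characterization
  have hadjchar : ∀ x y : Fin n, G.Adj x y ↔ ((x = u ∧ y = v) ∨ (x = v ∧ y = u) ∨
      (x = u ∧ y ∈ A) ∨ (y = u ∧ x ∈ A) ∨ (x = v ∧ y ∈ B) ∨ (y = v ∧ x ∈ B)) := by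
    intro x y
    constructor
    · intro hxy
      by_cases hxu : x = u
      · subst hxu
        by_cases hyv : y = v
        · exact Or.inl ⟨rfl, hyv⟩
        · have hyleaf : deg G y = 1 := hleaf y (fun h => G.loopless.irrefl x (h ▸ hxy)) hyv
          exact Or.inr (Or.inr (Or.inl ⟨rfl, by rw [hA, hP]; simp [hyleaf, hxy]⟩))
      · by_cases hxv : x = v
        · subst hxv
          by_cases hyu : y = u
          · exact Or.inr (Or.inl ⟨rfl, hyu⟩)
          · have hyleaf : deg G y = 1 := hleaf y hyu (fun h => G.loopless.irrefl x (h ▸ hxy))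
            exact Or.inr (Or.inr (Or.inr (Or.inr (Or.inl ⟨rfl, by rw [hB, hP]; simp [hyleaf, hxy]⟩))))
        · have hxleaf : deg G x = 1 := hleaf x hxu hxv
          rcases hlnbr x y hxleaf hxy with rfl | rfl
          · exact Or.inr (Or.inr (Or.inr (Or.inl ⟨rfl, by rw [hA, hP]; simp [hxleaf, hxy.symm]⟩)))
          · exact Or.inr (Or.inr (Or.inr (Or.inr (Or.inr ⟨rfl, by rw [hB, hP]; simp [hxleaf, hxy.symm]⟩))))
    · rintro (⟨rfl, rfl⟩ | ⟨rfl, rfl⟩ | ⟨rfl, hy⟩ | ⟨rfl, hy⟩ | ⟨rfl, hy⟩ | ⟨rfl, hy⟩)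
      · exact hadjuv
      · exact hadjuv.symm
      · rw [hA] at hy; simp at hy; exact hy.2
      · rw [hA] at hy; simp at hy; exact hy.2.symm
      · rw [hB] at hy; simp at hy; exact hy.2
      · rw [hB] at hy; simp at hy; exact hy.2.symm
  -- degrees of u and v
  have hdegu : deg G u = A.card + 1 := by
    rw [deg_card]
    have : Finset.univ.filter (fun w => G.Adj u w) = insert v A := by
      ext w
      simp only [Finset.mem_filter, Finset.mem_univ, true_and, Finset.mem_insert]
      rw [hadjchar u w]
      constructor
      · rintro (⟨-, rfl⟩ | ⟨h, -⟩ | ⟨-, hw⟩ | ⟨h, hw⟩ | ⟨h, -⟩ | ⟨rfl, hw⟩)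
        · exact Or.inl rfl
        · exact absurd h huv
        · exact Or.inr hw
        · exact absurd (hAleaf u hw) hdu
        · exact absurd h huv
        · exact absurd (hBleaf u hw) hdu
      · rintro (rfl | hw)
        · exact Or.inl ⟨rfl, rfl⟩
        · exact Or.inr (Or.inr (Or.inl ⟨rfl, hw⟩))
    rw [this, Finset.card_insert_of_notMem hvA]
  have hdegv : deg G v = B.card + 1 := by
    rw [deg_card]
    have : Finset.univ.filter (fun w => G.Adj v w) = insert u B := by
      ext w
      simp only [Finset.mem_filter, Finset.mem_univ, true_and, Finset.mem_insert]
      rw [hadjchar v w]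
      constructor
      · rintro (⟨h, -⟩ | ⟨-, rfl⟩ | ⟨h, -⟩ | ⟨rfl, hw⟩ | ⟨-, hw⟩ | ⟨h, hw⟩)
        · exact absurd h huv.symm
        · exact Or.inl rfl
        · exact absurd h huv.symm
        · exact absurd (hAleaf v hw) hdv
        · exact Or.inr hw
        · exact absurd (hBleaf v hw) hdv
      · rintro (rfl | hw)
        · exact Or.inr (Or.inl ⟨rfl, rfl⟩)
        · exact Or.inr (Or.inr (Or.inr (Or.inr (Or.inl ⟨rfl, hw⟩))))
    rw [this, Finset.card_insert_of_notMem huB]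
  have hAcard : 1 ≤ A.card := by
    have := hdegpos u
    rcases Nat.eq_zero_or_pos A.card with h | h
    · rw [h] at hdegu; exact absurd hdegu hdu
    · exact h
  have hBcard : 1 ≤ B.card := by
    rcases Nat.eq_zero_or_pos B.card with h | h
    · rw [h] at hdegv; exact absurd hdegv hdv
    · exact h
  have huniv : insert u (insert v (A ∪ B)) = Finset.univ := by
    apply Finset.eq_univ_of_forall
    intro x
    simp only [Finset.mem_insert, Finset.mem_union]
    by_cases hxu : x = u
    · exact Or.inl hxu
    by_cases hxv : x = v
    · exact Or.inr (Or.inl hxv)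
    · have : x ∈ A ∪ B := by
        rw [hunion, hP]; simp [hleaf x hxu hxv]
      rw [Finset.mem_union] at this
      tauto
  exact ⟨u, v, A, B, huv, hadjuv, hcards, hAcard, hBcard, hdegu, hdegv,
    hAleaf, hBleaf, huA, huB, hvA, hvB, hdisj, huniv, hadjchar⟩

open Finset in
lemma abc_formula {n : ℕ} (G : SimpleGraph (Fin n)) (u v : Fin n) (A B : Finset (Fin n))
    (huv : u ≠ v)
    (hdegu : deg G u = A.card + 1) (hdegv : deg G v = B.card + 1)
    (hAleaf : ∀ x ∈ A, deg G x = 1) (hBleaf : ∀ x ∈ B, deg G x = 1)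
    (huA : u ∉ A) (huB : u ∉ B) (hvA : v ∉ A) (hvB : v ∉ B)
    (hdisj : Disjoint A B)
    (huniv : insert u (insert v (A ∪ B)) = Finset.univ)
    (hadjchar : ∀ x y : Fin n, G.Adj x y ↔ ((x = u ∧ y = v) ∨ (x = v ∧ y = u) ∨
      (x = u ∧ y ∈ A) ∨ (y = u ∧ x ∈ A) ∨ (x = v ∧ y ∈ B) ∨ (y = v ∧ x ∈ B))) :
    ABC G = hfun (A.card : ℝ) + hfun (B.card : ℝ) +
      Real.sqrt (((A.card : ℝ) + (B.card : ℝ)) / (((A.card : ℝ)+1) * ((B.card : ℝ)+1))) := by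
  classical
  set F : Fin n → Fin n → ℝ := fun x y => if G.Adj x y then
    Real.sqrt (((deg G x : ℝ) + (deg G y : ℝ) - 2) / ((deg G x : ℝ) * (deg G y : ℝ)))
    else 0 with hF
  have habc : ABC G = (∑ x : Fin n, ∑ y : Fin n, F x y) / 2 := rfl
  -- inner sum for a leaf in A
  have hsumA : ∀ x ∈ A, ∑ y : Fin n, F x y =
      Real.sqrt ((A.card : ℝ)/((A.card : ℝ)+1)) := by
    intro x hx
    have hxu : x ≠ u := fun h => huA (h ▸ hx)
    have hxv : x ≠ v := fun h => hvA (h ▸ hx)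
    have hxB : x ∉ B := Finset.disjoint_left.1 hdisj hx
    rw [Finset.sum_eq_single u]
    · rw [hF]; simp only
      rw [if_pos ((hadjchar x u).2 (by tauto)), hAleaf x hx, hdegu]
      congr 1
      push_cast
      ring
    · intro y _ hy
      rw [hF]; simp only
      rw [if_neg]
      intro hadj
      rcases (hadjchar x y).1 hadj with h|h|h|h|h|h <;> tauto
    · intro h; exact absurd (Finset.mem_univ u) h
  have hsumB : ∀ x ∈ B, ∑ y : Fin n, F x y =
      Real.sqrt ((B.card : ℝ)/((B.card : ℝ)+1)) := by
    intro x hx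
    have hxu : x ≠ u := fun h => huB (h ▸ hx)
    have hxv : x ≠ v := fun h => hvB (h ▸ hx)
    have hxA : x ∉ A := Finset.disjoint_right.1 hdisj hx
    rw [Finset.sum_eq_single v]
    · rw [hF]; simp only
      rw [if_pos ((hadjchar x v).2 (by tauto)), hBleaf x hx, hdegv]
      congr 1
      push_cast
      ring
    · intro y _ hy
      rw [hF]; simp only
      rw [if_neg]
      intro hadj
      rcases (hadjchar x y).1 hadj with h|h|h|h|h|h <;> tauto
    · intro h; exact absurd (Finset.mem_univ v) h
  -- the bridge value
  have hbridge : F u v = Real.sqrt (((A.card : ℝ) + (B.card : ℝ)) /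
      (((A.card : ℝ)+1) * ((B.card : ℝ)+1))) := by
    rw [hF]; simp only
    rw [if_pos ((hadjchar u v).2 (by tauto)), hdegu, hdegv]
    congr 1
    push_cast
    ring
  -- inner sum for u
  have hfilteru : Finset.univ.filter (fun y => G.Adj u y) = insert v A := by
    ext w
    simp only [Finset.mem_filter, Finset.mem_univ, true_and, Finset.mem_insert]
    rw [hadjchar u w]
    constructor
    · rintro (⟨-, rfl⟩ | ⟨h, -⟩ | ⟨-, hw⟩ | ⟨h, hw⟩ | ⟨h, -⟩ | ⟨rfl, hw⟩)
      · exact Or.inl rfl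
      · exact absurd h huv
      · exact Or.inr hw
      · exact absurd (h ▸ hw) huA
      · exact absurd h huv
      · exact absurd hw huB
    · rintro (rfl | hw)
      · exact Or.inl ⟨rfl, rfl⟩
      · exact Or.inr (Or.inr (Or.inl ⟨rfl, hw⟩))
  have hfilterv : Finset.univ.filter (fun y => G.Adj v y) = insert u B := by
    ext w
    simp only [Finset.mem_filter, Finset.mem_univ, true_and, Finset.mem_insert]
    rw [hadjchar v w]
    constructor
    · rintro (⟨h, -⟩ | ⟨-, rfl⟩ | ⟨h, -⟩ | ⟨rfl, hw⟩ | ⟨-, hw⟩ | ⟨h, hw⟩)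
      · exact absurd h huv.symm
      · exact Or.inl rfl
      · exact absurd h huv.symm
      · exact absurd hw hvA
      · exact Or.inr hw
      · exact absurd (h ▸ hw) hvB
    · rintro (rfl | hw)
      · exact Or.inr (Or.inl ⟨rfl, rfl⟩)
      · exact Or.inr (Or.inr (Or.inr (Or.inr (Or.inl ⟨rfl, hw⟩))))
  have hsumu : ∑ y : Fin n, F u y =
      (A.card : ℝ) * Real.sqrt ((A.card : ℝ)/((A.card : ℝ)+1)) + F u v := by
    have h1 : ∑ y : Fin n, F u y = ∑ y ∈ Finset.univ.filter (fun y => G.Adj u y),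
        F u y := by
      rw [Finset.sum_filter]
      apply Finset.sum_congr rfl
      intro y _
      rw [hF]; simp only
      by_cases h : G.Adj u y
      · rw [if_pos h, if_pos h]
      · rw [if_neg h, if_neg h]
    rw [h1, hfilteru, Finset.sum_insert hvA, add_comm]
    congr 1
    have hval : ∀ y ∈ A, F u y = Real.sqrt ((A.card : ℝ)/((A.card : ℝ)+1)) := by
      intro y hy
      rw [hF]; simp only
      rw [if_pos ((hadjchar u y).2 (by tauto)), hAleaf y hy, hdegu]
      congr 1
      push_cast
      ring
    rw [Finset.sum_congr rfl hval, Finset.sum_const, nsmul_eq_mul]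
  have hsumv : ∑ y : Fin n, F v y =
      (B.card : ℝ) * Real.sqrt ((B.card : ℝ)/((B.card : ℝ)+1)) + F v u := by
    have h1 : ∑ y : Fin n, F v y = ∑ y ∈ Finset.univ.filter (fun y => G.Adj v y),
        F v y := by
      rw [Finset.sum_filter]
      apply Finset.sum_congr rfl
      intro y _
      rw [hF]; simp only
      by_cases h : G.Adj v y
      · rw [if_pos h, if_pos h]
      · rw [if_neg h, if_neg h]
    rw [h1, hfilterv, Finset.sum_insert huB, add_comm]
    congr 1
    have hval : ∀ y ∈ B, F v y = Real.sqrt ((B.card : ℝ)/((B.card : ℝ)+1)) := by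
      intro y hy
      rw [hF]; simp only
      rw [if_pos ((hadjchar v y).2 (by tauto)), hBleaf y hy, hdegv]
      congr 1
      push_cast
      ring
    rw [Finset.sum_congr rfl hval, Finset.sum_const, nsmul_eq_mul]
  have hFvu : F v u = F u v := by
    rw [hF]; simp only
    by_cases h : G.Adj u v
    · rw [if_pos h, if_pos h.symm]
      congr 1
      ring
    · rw [if_neg h, if_neg (fun h' => h h'.symm)]
  -- assemble the outer sum
  have houter : ∑ x : Fin n, ∑ y : Fin n, F x y =
      ∑ x ∈ insert u (insert v (A ∪ B)), ∑ y : Fin n, F x y := by rw [huniv]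
  have hnotmem1 : u ∉ insert v (A ∪ B) := by simp [huv, huA, huB]
  have hnotmem2 : v ∉ A ∪ B := by simp [hvA, hvB]
  rw [habc, houter, Finset.sum_insert hnotmem1, Finset.sum_insert hnotmem2,
    Finset.sum_union hdisj, Finset.sum_congr rfl hsumA, Finset.sum_congr rfl hsumB,
    Finset.sum_const, Finset.sum_const, nsmul_eq_mul, nsmul_eq_mul,
    hsumu, hsumv, hFvu, hbridge]
  unfold hfun
  ring

lemma Gprime_adj {n : ℕ} (p q : Fin n) : (Gprime n).Adj p q ↔
    ((p.val = 0 ∧ q.val = 1) ∨ (p.val = 1 ∧ q.val = 0) ∨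
    (p.val = 1 ∧ q.val = 2) ∨ (p.val = 2 ∧ q.val = 1) ∨
    (p.val = 0 ∧ 3 ≤ q.val) ∨ (q.val = 0 ∧ 3 ≤ p.val)) := Iff.rfl

open Finset in
lemma iso_construct {n : ℕ} (hn : 4 ≤ n) (G : SimpleGraph (Fin n))
    (u v w : Fin n) (A : Finset (Fin n))
    (huv : u ≠ v) (hcardA : A.card = n - 3)
    (huA : u ∉ A) (hvA : v ∉ A) (hwA : w ∉ A) (hwu : w ≠ u) (hwv : w ≠ v)
    (huniv : insert u (insert v (A ∪ {w})) = Finset.univ)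
    (hadjchar : ∀ x y : Fin n, G.Adj x y ↔ ((x = u ∧ y = v) ∨ (x = v ∧ y = u) ∨
      (x = u ∧ y ∈ A) ∨ (y = u ∧ x ∈ A) ∨ (x = v ∧ y = w) ∨ (y = v ∧ x = w))) :
    Nonempty (G ≃g Gprime n) := by
  classical
  set z0 : Fin n := ⟨0, by omega⟩ with hz0
  set z1 : Fin n := ⟨1, by omega⟩ with hz1
  set z2 : Fin n := ⟨2, by omega⟩ with hz2
  set C : Finset (Fin n) := Finset.univ.filter (fun i => 3 ≤ i.val) with hC
  have hCcard : C.card = n - 3 := by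
    have heq : C = Finset.univ \ {z0, z1, z2} := by
      ext x
      simp only [hC, Finset.mem_filter, Finset.mem_univ, true_and, Finset.mem_sdiff,
        Finset.mem_insert, Finset.mem_singleton, hz0, hz1, hz2, Fin.ext_iff]
      omega
    rw [heq, Finset.card_sdiff_of_subset (Finset.subset_univ _), Finset.card_univ, Fintype.card_fin]
    have h3 : ({z0, z1, z2} : Finset (Fin n)).card = 3 := by
      rw [Finset.card_insert_of_notMem, Finset.card_insert_of_notMem,
        Finset.card_singleton]
      · simp [hz1, hz2, Fin.ext_iff]
      · simp [hz0, hz1, hz2, Fin.ext_iff]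
    rw [h3]
  have e : {x // x ∈ A} ≃ {x // x ∈ C} := Finset.equivOfCardEq (by rw [hcardA, hCcard])
  obtain ⟨φ, hφu, hφv, hφw, hφA⟩ : ∃ φ : Fin n → Fin n, φ u = z0 ∧ φ v = z1 ∧ φ w = z2 ∧
      (∀ x (hx : x ∈ A), φ x = (e ⟨x, hx⟩ : Fin n)) := by
    refine ⟨fun x => if x = u then z0 else if x = v then z1 else if x = w then z2
      else if hx : x ∈ A then (e ⟨x, hx⟩ : Fin n) else z0, by simp, by simp [Ne.symm huv],
      by simp [hwu, hwv], ?_⟩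
    intro x hx
    have hxu : x ≠ u := fun h => huA (h ▸ hx)
    have hxv : x ≠ v := fun h => hvA (h ▸ hx)
    have hxw : x ≠ w := fun h => hwA (h ▸ hx)
    simp [hxu, hxv, hxw, hx]
  have hclass : ∀ x : Fin n, x = u ∨ x = v ∨ x = w ∨ x ∈ A := by
    intro x
    have : x ∈ insert u (insert v (A ∪ {w})) := by rw [huniv]; exact Finset.mem_univ x
    simp only [Finset.mem_insert, Finset.mem_union, Finset.mem_singleton] at this
    tauto
  have hval : ∀ x : Fin n, (x = u ∧ (φ x).val = 0) ∨ (x = v ∧ (φ x).val = 1) ∨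
      (x = w ∧ (φ x).val = 2) ∨ (x ∈ A ∧ 3 ≤ (φ x).val) := by
    intro x
    rcases hclass x with rfl | rfl | rfl | hx
    · exact Or.inl ⟨rfl, by rw [hφu]⟩
    · exact Or.inr (Or.inl ⟨rfl, by rw [hφv]⟩)
    · exact Or.inr (Or.inr (Or.inl ⟨rfl, by rw [hφw]⟩))
    · refine Or.inr (Or.inr (Or.inr ⟨hx, ?_⟩))
      rw [hφA x hx]
      exact (Finset.mem_filter.1 (e ⟨x, hx⟩).2).2
  have hinj : Function.Injective φ := by
    intro x y hxy
    have hv := congrArg Fin.val hxy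
    rcases hval x with ⟨rfl, h1⟩ | ⟨rfl, h1⟩ | ⟨rfl, h1⟩ | ⟨hx, h1⟩ <;>
      rcases hval y with ⟨rfl, h2⟩ | ⟨rfl, h2⟩ | ⟨rfl, h2⟩ | ⟨hy, h2⟩
    · rfl
    · omega
    · omega
    · omega
    · omega
    · rfl
    · omega
    · omega
    · omega
    · omega
    · rfl
    · omega
    · omega
    · omega
    · omega
    · rw [hφA x hx, hφA y hy] at hxy
      exact congrArg Subtype.val (e.injective (Subtype.ext hxy))
  have hbij : Function.Bijective φ := Finite.injective_iff_bijective.mp hinj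
  have hφA3 : ∀ x (hx : x ∈ A), 3 ≤ (φ x).val := by
    intro x hx
    rw [hφA x hx]
    exact (Finset.mem_filter.1 (e ⟨x, hx⟩).2).2
  have hmain : ∀ a b : Fin n, (Gprime n).Adj (φ a) (φ b) ↔ G.Adj a b := by
    have hT : ∀ a b : Fin n, G.Adj a b → (Gprime n).Adj (φ a) (φ b) := by
      intro a b h
      rw [Gprime_adj]
      rcases (hadjchar a b).1 h with ⟨rfl, rfl⟩|⟨rfl, rfl⟩|⟨rfl, hb⟩|⟨rfl, ha⟩|⟨rfl, rfl⟩|⟨rfl, hb'⟩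
      · exact Or.inl ⟨by rw [hφu], by rw [hφv]⟩
      · exact Or.inr (Or.inl ⟨by rw [hφv], by rw [hφu]⟩)
      · exact Or.inr (Or.inr (Or.inr (Or.inr (Or.inl ⟨by rw [hφu], hφA3 b hb⟩))))
      · exact Or.inr (Or.inr (Or.inr (Or.inr (Or.inr ⟨by rw [hφu], hφA3 a ha⟩))))
      · exact Or.inr (Or.inr (Or.inl ⟨by rw [hφv], by rw [hφw]⟩))
      · subst hb'
        exact Or.inr (Or.inr (Or.inr (Or.inl ⟨by rw [hφw], by rw [hφv]⟩)))
    have hF : ∀ a b : Fin n, (Gprime n).Adj (φ a) (φ b) → G.Adj a b := by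
      intro a b hgp
      rw [Gprime_adj] at hgp
      rw [hadjchar]
      rcases hval a with ⟨rfl, h1⟩ | ⟨rfl, h1⟩ | ⟨rfl, h1⟩ | ⟨hx, h1⟩ <;>
        rcases hval b with ⟨rfl, h2⟩ | ⟨rfl, h2⟩ | ⟨rfl, h2⟩ | ⟨hy, h2⟩
      · exact absurd hgp (by omega)
      · exact Or.inl ⟨rfl, rfl⟩
      · exact absurd hgp (by omega)
      · exact Or.inr (Or.inr (Or.inl ⟨rfl, hy⟩))
      · exact Or.inr (Or.inl ⟨rfl, rfl⟩)
      · exact absurd hgp (by omega)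
      · exact Or.inr (Or.inr (Or.inr (Or.inr (Or.inl ⟨rfl, rfl⟩))))
      · exact absurd hgp (by omega)
      · exact absurd hgp (by omega)
      · exact Or.inr (Or.inr (Or.inr (Or.inr (Or.inr ⟨rfl, rfl⟩))))
      · exact absurd hgp (by omega)
      · exact absurd hgp (by omega)
      · exact Or.inr (Or.inr (Or.inr (Or.inl ⟨rfl, hx⟩)))
      · exact absurd hgp (by omega)
      · exact absurd hgp (by omega)
      · exact absurd hgp (by omega)
    exact fun a b => ⟨hF a b, hT a b⟩
  exact ⟨⟨Equiv.ofBijective φ hbij, @fun a b => hmain a b⟩⟩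

lemma Gprime_adj' {n : ℕ} (p q : Fin n) : (Gprime n).Adj p q ↔
    ((p.val = 0 ∧ q.val = 1) ∨ (p.val = 1 ∧ q.val = 0) ∨
    (p.val = 1 ∧ q.val = 2) ∨ (p.val = 2 ∧ q.val = 1) ∨
    (p.val = 0 ∧ 3 ≤ q.val) ∨ (q.val = 0 ∧ 3 ≤ p.val)) := Iff.rfl

lemma deg_card' (G : SimpleGraph (Fin n)) [DecidableRel G.Adj] (x : Fin n) :
    deg G x = (Finset.univ.filter (fun w => G.Adj x w)).card := by
  unfold deg
  rw [Nat.card_eq_fintype_card, ← Set.toFinset_card]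
  congr 1
  ext w
  simp

lemma deg_iso {V W : Type*} (G : SimpleGraph V) (G' : SimpleGraph W) (f : G ≃g G')
    (x : V) : deg G x = deg G' (f x) := by
  unfold deg
  apply Nat.card_congr
  exact Equiv.subtypeEquiv f.toEquiv (fun w => (f.map_adj_iff).symm)

lemma deg_Gprime_zero {n : ℕ} (hn : 4 ≤ n) :
    deg (Gprime n) ⟨0, by omega⟩ = n - 2 := by
  classical
  rw [deg_card']
  have heq : Finset.univ.filter (fun w => (Gprime n).Adj ⟨0, by omega⟩ w) =
      Finset.univ \ {(⟨0, by omega⟩ : Fin n), ⟨2, by omega⟩} := by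
    ext w
    simp only [Finset.mem_filter, Finset.mem_univ, true_and, Finset.mem_sdiff,
      Finset.mem_insert, Finset.mem_singleton, Gprime_adj', Fin.ext_iff]
    omega
  rw [heq, Finset.card_sdiff_of_subset (Finset.subset_univ _), Finset.card_univ, Fintype.card_fin]
  have h2 : ({(⟨0, by omega⟩ : Fin n), ⟨2, by omega⟩} : Finset (Fin n)).card = 2 := by
    rw [Finset.card_insert_of_notMem (by simp [Fin.ext_iff]), Finset.card_singleton]
  rw [h2]


set_option maxHeartbeats 2000000 in
open Finset in
theorem abc_max_pendent_eq_n_sub_two {n : ℕ} (hn : 4 ≤ n) (G : SimpleGraph (Fin n))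
    (hconn : G.Connected) (hp : Nat.card {v | deg G v = 1} = n - 2) :
    ABC G ≤ ((n : ℝ) - 3) * Real.sqrt (((n : ℝ) - 3) / ((n : ℝ) - 2)) + Real.sqrt 2 ∧
    (ABC G = ((n : ℝ) - 3) * Real.sqrt (((n : ℝ) - 3) / ((n : ℝ) - 2)) + Real.sqrt 2 ↔
      Nonempty (G ≃g Gprime n)) := by
  classical
  obtain ⟨u, v, A, B, huv, hadjuv, hcards, hAcard, hBcard, hdegu, hdegv,
    hAleaf, hBleaf, huA, huB, hvA, hvB, hdisj, huniv, hadjchar⟩ :=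
    structure_lemma hn G hconn hp
  have habc := abc_formula G u v A B huv hdegu hdegv hAleaf hBleaf huA huB hvA hvB
    hdisj huniv hadjchar
  have har1 : (1:ℝ) ≤ (A.card : ℝ) := by exact_mod_cast hAcard
  have hbr1 : (1:ℝ) ≤ (B.card : ℝ) := by exact_mod_cast hBcard
  have hsum : (A.card : ℝ) + (B.card : ℝ) = (n:ℝ) - 2 := by
    have h2 : ((A.card + B.card : ℕ) : ℝ) = ((n - 2 : ℕ) : ℝ) := by rw [hcards]
    rw [Nat.cast_sub (by omega : 2 ≤ n)] at h2
    push_cast at h2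
    linarith
  have hkey := key_ineq har1 hbr1
  have hrw : hfun ((A.card : ℝ) + (B.card : ℝ) - 1) =
      ((n : ℝ) - 3) * Real.sqrt (((n : ℝ) - 3) / ((n : ℝ) - 2)) := by
    rw [hsum, show (n:ℝ) - 2 - 1 = (n:ℝ) - 3 by ring]
    unfold hfun
    rw [show (n:ℝ) - 3 + 1 = (n:ℝ) - 2 by ring]
  rw [hrw] at hkey
  constructor
  · rw [habc]
    exact hkey.1
  constructor
  · -- equality implies isomorphism
    intro heq
    rw [habc] at heq
    have hone : A.card = 1 ∨ B.card = 1 := by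
      rcases hkey.2.1 heq with h | h
      · left; exact_mod_cast h
      · right; exact_mod_cast h
    rcases hone with hA1 | hB1
    · -- A = {w}; swap roles of u,v
      obtain ⟨w, hw⟩ := Finset.card_eq_one.1 hA1
      have hwA : w ∈ A := by rw [hw]; simp
      have hBn3 : B.card = n - 3 := by omega
      have hwB : w ∉ B := Finset.disjoint_left.1 hdisj hwA
      have hwu : w ≠ u := fun h => huA (h ▸ hwA)
      have hwv : w ≠ v := fun h => hvA (h ▸ hwA)
      have huniv' : insert v (insert u (B ∪ {w})) = Finset.univ := by
        rw [← huniv, hw]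
        ext x
        simp only [Finset.mem_insert, Finset.mem_union, Finset.mem_singleton]
        tauto
      have hadjchar' : ∀ x y : Fin n, G.Adj x y ↔ ((x = v ∧ y = u) ∨ (x = u ∧ y = v) ∨
          (x = v ∧ y ∈ B) ∨ (y = v ∧ x ∈ B) ∨ (x = u ∧ y = w) ∨ (y = u ∧ x = w)) := by
        intro x y
        rw [hadjchar x y, hw]
        simp only [Finset.mem_singleton]
        tauto
      exact iso_construct hn G v u w B huv.symm hBn3 hvB huB hwB hwv hwu huniv' hadjchar'
    · -- B = {w}
      obtain ⟨w, hw⟩ := Finset.card_eq_one.1 hB1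
      have hwB : w ∈ B := by rw [hw]; simp
      have hAn3 : A.card = n - 3 := by omega
      have hwA : w ∉ A := Finset.disjoint_right.1 hdisj hwB
      have hwu : w ≠ u := fun h => huB (h ▸ hwB)
      have hwv : w ≠ v := fun h => hvB (h ▸ hwB)
      have huniv' : insert u (insert v (A ∪ {w})) = Finset.univ := by
        rw [← huniv, hw]
      have hadjchar' : ∀ x y : Fin n, G.Adj x y ↔ ((x = u ∧ y = v) ∨ (x = v ∧ y = u) ∨
          (x = u ∧ y ∈ A) ∨ (y = u ∧ x ∈ A) ∨ (x = v ∧ y = w) ∨ (y = v ∧ x = w)) := by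
        intro x y
        rw [hadjchar x y, hw]
        simp only [Finset.mem_singleton]
      exact iso_construct hn G u v w A huv hAn3 huA hvA hwA hwu hwv huniv' hadjchar'
  · -- isomorphism implies equality
    rintro ⟨f⟩
    have hx : deg G (f.symm ⟨0, by omega⟩) = n - 2 := by
      rw [deg_iso G (Gprime n) f, RelIso.apply_symm_apply]
      exact deg_Gprime_zero hn
    set x := f.symm (⟨0, by omega⟩ : Fin n) with hxdef
    have hxuv : x = u ∨ x = v := by
      have hmem : x ∈ insert u (insert v (A ∪ B)) := by
        rw [huniv]; exact Finset.mem_univ x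
      simp only [Finset.mem_insert, Finset.mem_union] at hmem
      rcases hmem with h | h | h | h
      · exact Or.inl h
      · exact Or.inr h
      · exfalso; have := hAleaf x h; omega
      · exfalso; have := hBleaf x h; omega
    have hone : A.card = 1 ∨ B.card = 1 := by
      rcases hxuv with h | h
      · rw [h] at hx; rw [hdegu] at hx; right; omega
      · rw [h] at hx; rw [hdegv] at hx; left; omega
    rw [habc]
    apply hkey.2.2
    rcases hone with h | h
    · left; rw [h]; norm_num
    · right; rw [h]; norm_num
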